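/- (Technical state-transformation lemma) Let Σ = F_q^m, V, W : Σ^n → ℂ with Σ_x|V(x)|² = Σ_e|W(e)|² = 1, F : Σ^n → Σ^n a function, and GOOD ⊆ Σ^n × Σ^n a set such that F(x+e) = x for all (x,e) ∈ GOOD, with BAD its complement. Assume (1) Σ_{(x,e)∈BAD} |V̂(x)Ŵ(e)|² ≤ ε and (2) Σ_{z∈Σ^n} |Σ_{(x,e)∈BAD : x+e=z} V̂(x)Ŵ(e)|² ≤ δ. Then the ℓ² distance between the vector (over pairs registers) obtained by applying: Fourier transform to both registers, then (x,e) ↦ (x, x+e), then (x,z) ↦ (x − F(z), z), then inverse Fourier transform on the second register, to the vector Σ_{x,e} V(x)W(e)|x⟩|e⟩, and the vector |Σ|^{n/2} Σ_z (V·W)(z)|0⟩|z⟩, is at most √ε + √δ. -/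

import Mathlib

open Finset

noncomputable section

variable (p : ℕ) [Fact p.Prime] (F : Type) [Field F] [Fintype F] [Algebra (ZMod p) F]

/-- `ω_p ^ Tr(x)` where `ω_p = e^{2πi/p}` and `Tr : F_q → F_p` is the field trace. -/
def chr (x : F) : ℂ :=
  Complex.exp (2 * Real.pi * Complex.I / p) ^ (Algebra.trace (ZMod p) F x).val

/-- Dot product on `Σ^n = (F_q^m)^n`, identifying it with `F_q^{nm}`. -/
def dotP (n m : ℕ) (x z : Fin n → Fin m → F) : F :=
  ∑ i, ∑ j, x i j * z i j

/-- The Fourier transform over `Σ^n` for `Σ = F_q^m`: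
`f̂(z) = |Σ|^{-n/2} ∑_x f(x) ω_p^{Tr(x·z)}`. -/
def FT (n m : ℕ) (f : (Fin n → Fin m → F) → ℂ) (z : Fin n → Fin m → F) : ℂ :=
  (↑(Real.sqrt ((Fintype.card F : ℝ) ^ (m * n))))⁻¹ *
    ∑ x : Fin n → Fin m → F, f x * chr p F (dotP F n m x z)

/-- Apply the Fourier transform to both registers of a vector on `Σ^n × Σ^n`. -/
def FTboth (n m : ℕ)
    (g : (Fin n → Fin m → F) × (Fin n → Fin m → F) → ℂ)
    (pe : (Fin n → Fin m → F) × (Fin n → Fin m → F)) : ℂ :=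
  ((↑(Real.sqrt ((Fintype.card F : ℝ) ^ (m * n))))⁻¹) ^ 2 *
    ∑ qe : (Fin n → Fin m → F) × (Fin n → Fin m → F),
      g qe * chr p F (dotP F n m qe.1 pe.1) * chr p F (dotP F n m qe.2 pe.2)

/-- Apply the inverse Fourier transform to the second register. -/
def invFTsecond (n m : ℕ)
    (g : (Fin n → Fin m → F) × (Fin n → Fin m → F) → ℂ)
    (pe : (Fin n → Fin m → F) × (Fin n → Fin m → F)) : ℂ :=
  (↑(Real.sqrt ((Fintype.card F : ℝ) ^ (m * n))))⁻¹ *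
    ∑ z : Fin n → Fin m → F, g (pe.1, z) * chr p F (- dotP F n m z pe.2)

/-- The unitary basis permutation `(x, e) ↦ (x, x + e)` acting on vectors. -/
def Uadd (n m : ℕ)
    (g : (Fin n → Fin m → F) × (Fin n → Fin m → F) → ℂ)
    (pe : (Fin n → Fin m → F) × (Fin n → Fin m → F)) : ℂ :=
  g (pe.1, pe.2 - pe.1)

/-- The unitary basis permutation `(x, z) ↦ (x - F(z), z)` acting on vectors. -/
def UFmap (n m : ℕ) (Fd : (Fin n → Fin m → F) → (Fin n → Fin m → F))
    (g : (Fin n → Fin m → F) × (Fin n → Fin m → F) → ℂ)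
    (pe : (Fin n → Fin m → F) × (Fin n → Fin m → F)) : ℂ :=
  g (pe.1 + Fd pe.2, pe.2)

variable (n m : ℕ)

open scoped Classical

lemma omega_pow_p : Complex.exp (2 * Real.pi * Complex.I / p) ^ p = 1 := by
  have hp : (p : ℂ) ≠ 0 := Nat.cast_ne_zero.mpr (Fact.out (p := p.Prime)).ne_zero
  rw [← Complex.exp_nat_mul]
  rw [show (p : ℂ) * (2 * Real.pi * Complex.I / p) = 2 * Real.pi * Complex.I by field_simp]
  exact Complex.exp_two_pi_mul_I

lemma omega_pow_mod (k : ℕ) :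
    Complex.exp (2 * Real.pi * Complex.I / p) ^ (k % p) =
    Complex.exp (2 * Real.pi * Complex.I / p) ^ k := by
  conv_rhs => rw [← Nat.div_add_mod k p]
  rw [pow_add, pow_mul, omega_pow_p, one_pow, one_mul]

lemma chr_zero : chr p F 0 = 1 := by
  simp [chr]

lemma chr_add (x y : F) : chr p F (x + y) = chr p F x * chr p F y := by
  unfold chr
  rw [map_add, ZMod.val_add, omega_pow_mod, pow_add]

lemma chr_neg (x : F) : chr p F (-x) = (chr p F x)⁻¹ := by
  have h : chr p F x * chr p F (-x) = 1 := by
    rw [← chr_add]; simp [chr_zero]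
  exact eq_inv_of_mul_eq_one_left (by rw [mul_comm] at h; exact h)

lemma chr_conj (x : F) : (starRingEnd ℂ) (chr p F x) = chr p F (-x) := by
  have habs : ‖(chr p F x)‖ = 1 := by
    unfold chr
    rw [norm_pow]
    have : ‖(Complex.exp (2 * Real.pi * Complex.I / p))‖ = 1 := by
      rw [show (2 * Real.pi * Complex.I / p : ℂ) = (2 * Real.pi / p : ℝ) * Complex.I by
        push_cast; ring]
      exact Complex.norm_exp_ofReal_mul_I _
    rw [this, one_pow]
  have h1 : (starRingEnd ℂ) (chr p F x) * chr p F x = 1 := by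
    rw [mul_comm, Complex.mul_conj, ← Complex.sq_norm, habs]; norm_num
  rw [chr_neg]
  exact eq_inv_of_mul_eq_one_left h1

lemma chr_ne_one : ∃ s : F, chr p F s ≠ 1 := by
  have h1 : FiniteDimensional (ZMod p) F := Module.Finite.of_finite
  have h2 : Algebra.IsSeparable (ZMod p) F := inferInstance
  have htr : ∃ s : F, Algebra.trace (ZMod p) F s ≠ 0 := by
    by_contra hf
    push_neg at hf
    exact Algebra.trace_ne_zero (ZMod p) F (LinearMap.ext hf)
  obtain ⟨s, hs⟩ := htr
  refine ⟨s, ?_⟩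
  unfold chr
  have hp0 : p ≠ 0 := (Fact.out (p := p.Prime)).ne_zero
  have hprim := Complex.isPrimitiveRoot_exp p hp0
  apply hprim.pow_ne_one_of_pos_of_lt
  · exact fun h => hs (by
      have := (ZMod.val_eq_zero _).mp h
      exact this)
  · exact ZMod.val_lt _

lemma sum_chr_eq_zero : ∑ t : F, chr p F t = 0 := by
  obtain ⟨s, hs⟩ := chr_ne_one p F
  have h : chr p F s * ∑ t : F, chr p F t = ∑ t : F, chr p F t := by
    rw [Finset.mul_sum]
    rw [← Equiv.sum_comp (Equiv.addLeft s) (chr p F)]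
    exact Finset.sum_congr rfl fun t _ => by rw [← chr_add]; rfl
  by_contra hne
  exact hs (mul_right_cancel₀ hne (by rw [h, one_mul]))

lemma sum_chr_mul (a : F) :
    ∑ t : F, chr p F (t * a) = if a = 0 then (Fintype.card F : ℂ) else 0 := by
  split_ifs with h
  · simp [h, chr_zero, Finset.card_univ]
  · rw [← sum_chr_eq_zero p F]
    exact Fintype.sum_equiv (Equiv.mulRight₀ a h) _ _ fun t => by
      simp [Equiv.mulRight₀]

lemma chr_finset_sum {α : Type*} (s : Finset α) (f : α → F) :
    chr p F (∑ i ∈ s, f i) = ∏ i ∈ s, chr p F (f i) := by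
  induction s using Finset.cons_induction with
  | empty => simp [chr_zero]
  | cons a s ha ih => rw [Finset.sum_cons, Finset.prod_cons, chr_add, ih]

lemma sum_prod_swap {ι κ : Type*} [Fintype ι] [Fintype κ] [DecidableEq ι] (g : ι → κ → ℂ) :
    ∑ x : ι → κ, ∏ i, g i (x i) = ∏ i, ∑ t, g i t := by
  rw [Finset.prod_univ_sum, Fintype.piFinset_univ]


lemma sum_chr_dot (n m : ℕ) (z : Fin n → Fin m → F) :
    ∑ x : Fin n → Fin m → F, chr p F (dotP F n m x z)
      = if z = 0 then ((Fintype.card F : ℂ) ^ (m * n)) else 0 := by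
  have key : ∑ x : Fin n → Fin m → F, chr p F (dotP F n m x z)
      = ∏ i : Fin n, ∏ j : Fin m, ∑ t : F, chr p F (t * z i j) := by
    calc ∑ x : Fin n → Fin m → F, chr p F (dotP F n m x z)
        = ∑ x : Fin n → Fin m → F, ∏ i, ∏ j, chr p F (x i j * z i j) := by
          refine Finset.sum_congr rfl fun x _ => ?_
          rw [dotP, chr_finset_sum]
          exact Finset.prod_congr rfl fun i _ => chr_finset_sum p F _ _
      _ = ∏ i : Fin n, ∑ y : Fin m → F, ∏ j, chr p F (y j * z i j) :=
          sum_prod_swap (fun i (y : Fin m → F) => ∏ j, chr p F (y j * z i j))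
      _ = ∏ i : Fin n, ∏ j : Fin m, ∑ t : F, chr p F (t * z i j) :=
          Finset.prod_congr rfl fun i _ => sum_prod_swap (fun j t => chr p F (t * z i j))
  rw [key]
  simp_rw [sum_chr_mul]
  split_ifs with h
  · subst h
    simp [Finset.prod_const, Finset.card_univ, ← pow_mul, mul_comm]
  · have : ∃ i j, z i j ≠ 0 := by
      by_contra hc
      push_neg at hc
      exact h (funext fun i => funext fun j => hc i j)
    obtain ⟨i, j, hij⟩ := this
    refine Finset.prod_eq_zero (Finset.mem_univ i) ?_
    refine Finset.prod_eq_zero (Finset.mem_univ j) ?_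
    simp [hij]

variable (n m : ℕ)

lemma dotP_comm (x z : Fin n → Fin m → F) : dotP F n m x z = dotP F n m z x := by
  unfold dotP; simp_rw [mul_comm]

lemma dotP_sub_left (x y z : Fin n → Fin m → F) :
    dotP F n m (x - y) z = dotP F n m x z - dotP F n m y z := by
  unfold dotP; simp [sub_mul, Finset.sum_sub_distrib]

lemma dotP_sub_right (x y z : Fin n → Fin m → F) :
    dotP F n m x (y - z) = dotP F n m x y - dotP F n m x z := by
  unfold dotP; simp [mul_sub, Finset.sum_sub_distrib]

lemma sum_chr_dot' (w : Fin n → Fin m → F) :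
    ∑ e : Fin n → Fin m → F, chr p F (dotP F n m w e)
      = if w = 0 then ((Fintype.card F : ℂ) ^ (m * n)) else 0 := by
  simp_rw [dotP_comm F n m w]
  exact sum_chr_dot p F n m w


lemma sqrt_card_pos : 0 < Real.sqrt ((Fintype.card F : ℝ) ^ (m * n)) := by
  apply Real.sqrt_pos.mpr
  positivity

lemma sqrt_card_sq :
    ((Real.sqrt ((Fintype.card F : ℝ) ^ (m * n)) : ℝ) : ℂ) ^ 2
      = ((Fintype.card F : ℂ) ^ (m * n)) := by
  rw [show ((Real.sqrt ((Fintype.card F : ℝ) ^ (m * n)) : ℝ) : ℂ) ^ 2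
      = (((Real.sqrt ((Fintype.card F : ℝ) ^ (m * n)) ^ 2 : ℝ)) : ℂ) by push_cast; ring]
  rw [Real.sq_sqrt (by positivity)]
  push_cast
  ring

lemma FT_conv (V W : (Fin n → Fin m → F) → ℂ) (z : Fin n → Fin m → F) :
    ∑ x : Fin n → Fin m → F, FT p F n m V x * FT p F n m W (z - x)
      = (↑(Real.sqrt ((Fintype.card F : ℝ) ^ (m * n))) : ℂ) *
        FT p F n m (fun a => V a * W a) z := by
  set s : ℂ := (↑(Real.sqrt ((Fintype.card F : ℝ) ^ (m * n))) : ℂ) with hs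
  have hs0 : s ≠ 0 := by
    rw [hs]
    exact_mod_cast (sqrt_card_pos F n m).ne'
  have hsq : s ^ 2 = ((Fintype.card F : ℂ) ^ (m * n)) := sqrt_card_sq F n m
  unfold FT
  rw [← hs]
  have key : ∀ a b : Fin n → Fin m → F,
      ∑ x : Fin n → Fin m → F,
        chr p F (dotP F n m a x) * chr p F (dotP F n m b (z - x))
      = chr p F (dotP F n m b z) * (if a = b then ((Fintype.card F : ℂ) ^ (m * n)) else 0) := by
    intro a b
    have h1 : ∀ x : Fin n → Fin m → F,
        chr p F (dotP F n m a x) * chr p F (dotP F n m b (z - x))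
        = chr p F (dotP F n m b z) * chr p F (dotP F n m (a - b) x) := by
      intro x
      rw [← chr_add, ← chr_add]
      congr 1
      rw [dotP_sub_right, dotP_sub_left]
      ring
    simp_rw [h1, ← Finset.mul_sum, sum_chr_dot', sub_eq_zero]
  calc ∑ x : Fin n → Fin m → F,
        (s⁻¹ * ∑ a, V a * chr p F (dotP F n m a x)) *
        (s⁻¹ * ∑ b, W b * chr p F (dotP F n m b (z - x)))
      = s⁻¹ * s⁻¹ * ∑ x : Fin n → Fin m → F, ∑ a, ∑ b,
          (V a * W b) * (chr p F (dotP F n m a x) * chr p F (dotP F n m b (z - x))) := by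
        conv_rhs => rw [Finset.mul_sum]
        refine Finset.sum_congr rfl fun x _ => ?_
        rw [mul_mul_mul_comm, Finset.sum_mul_sum]
        congr 1
        refine Finset.sum_congr rfl fun a _ => ?_
        refine Finset.sum_congr rfl fun b _ => ?_
        ring
    _ = s⁻¹ * s⁻¹ * ∑ a, ∑ b,
          (V a * W b) * (chr p F (dotP F n m b z) *
            (if a = b then ((Fintype.card F : ℂ) ^ (m * n)) else 0)) := by
        congr 1
        rw [Finset.sum_comm]
        refine Finset.sum_congr rfl fun a _ => ?_
        rw [Finset.sum_comm]
        refine Finset.sum_congr rfl fun b _ => ?_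
        rw [← Finset.mul_sum, key a b]
    _ = s⁻¹ * s⁻¹ * ∑ a, ((Fintype.card F : ℂ) ^ (m * n) *
          ((V a * W a) * chr p F (dotP F n m a z))) := by
        congr 1
        refine Finset.sum_congr rfl fun a _ => ?_
        rw [Finset.sum_eq_single a]
        · simp only [if_pos trivial]
          ring
        · intro b _ hb
          simp [Ne.symm hb]
        · intro h
          exact absurd (Finset.mem_univ a) h
    _ = s * (s⁻¹ * ∑ a, (V a * W a) * chr p F (dotP F n m a z)) := by
        rw [← Finset.mul_sum, ← hsq]
        field_simp

lemma parseval_aux (h : (Fin n → Fin m → F) → ℂ) :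
    ∑ e : Fin n → Fin m → F,
      ‖((↑(Real.sqrt ((Fintype.card F : ℝ) ^ (m * n))) : ℂ)⁻¹ *
        ∑ z : Fin n → Fin m → F, h z * chr p F (- dotP F n m z e))‖ ^ 2
      = ∑ z : Fin n → Fin m → F, ‖(h z)‖ ^ 2 := by
  set s : ℂ := (↑(Real.sqrt ((Fintype.card F : ℝ) ^ (m * n))) : ℂ) with hs
  have hs0 : s ≠ 0 := by
    rw [hs]
    exact_mod_cast (sqrt_card_pos F n m).ne'
  have hsq : s ^ 2 = ((Fintype.card F : ℂ) ^ (m * n)) := sqrt_card_sq F n m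
  have hsc : (starRingEnd ℂ) s = s := by rw [hs, Complex.conj_ofReal]
  have habs : ∀ w : ℂ, ‖w‖ ^ 2 = (w * (starRingEnd ℂ) w).re := by
    intro w
    rw [Complex.mul_conj, Complex.sq_norm]
    simp
  simp_rw [habs]
  rw [← Complex.re_sum, ← Complex.re_sum]
  congr 1
  have key : ∀ z z' : Fin n → Fin m → F,
      ∑ e : Fin n → Fin m → F,
        chr p F (- dotP F n m z e) * chr p F (dotP F n m z' e)
      = if z' = z then ((Fintype.card F : ℂ) ^ (m * n)) else 0 := by
    intro z z'
    have h1 : ∀ e, chr p F (- dotP F n m z e) * chr p F (dotP F n m z' e)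
        = chr p F (dotP F n m (z' - z) e) := by
      intro e
      rw [← chr_add, dotP_sub_left]
      ring_nf
    simp_rw [h1, sum_chr_dot', sub_eq_zero]
  calc ∑ e : Fin n → Fin m → F,
        (s⁻¹ * ∑ z, h z * chr p F (- dotP F n m z e)) *
          (starRingEnd ℂ) (s⁻¹ * ∑ z, h z * chr p F (- dotP F n m z e))
      = ∑ e : Fin n → Fin m → F, s⁻¹ * s⁻¹ * ∑ z, ∑ z',
          (h z * (starRingEnd ℂ) (h z')) *
            (chr p F (- dotP F n m z e) * chr p F (dotP F n m z' e)) := by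
        refine Finset.sum_congr rfl fun e _ => ?_
        rw [map_mul, map_inv₀, hsc, map_sum]
        rw [mul_mul_mul_comm, Finset.sum_mul_sum]
        congr 1
        refine Finset.sum_congr rfl fun z _ => ?_
        refine Finset.sum_congr rfl fun z' _ => ?_
        rw [map_mul, chr_conj, neg_neg]
        ring
    _ = s⁻¹ * s⁻¹ * ∑ z, ∑ z',
          (h z * (starRingEnd ℂ) (h z')) *
            (if z' = z then ((Fintype.card F : ℂ) ^ (m * n)) else 0) := by
        rw [← Finset.mul_sum, Finset.sum_comm]
        congr 1
        refine Finset.sum_congr rfl fun z _ => ?_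
        rw [Finset.sum_comm]
        refine Finset.sum_congr rfl fun z' _ => ?_
        rw [← Finset.mul_sum, key z z']
    _ = s⁻¹ * s⁻¹ * ∑ z, ((Fintype.card F : ℂ) ^ (m * n) * (h z * (starRingEnd ℂ) (h z))) := by
        congr 1
        refine Finset.sum_congr rfl fun z _ => ?_
        rw [Finset.sum_eq_single z]
        · simp only [if_pos trivial]
          ring
        · intro b _ hb
          simp [hb]
        · intro hh
          exact absurd (Finset.mem_univ z) hh
    _ = ∑ z, h z * (starRingEnd ℂ) (h z) := by
        rw [← Finset.mul_sum, ← mul_assoc, ← hsq]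
        field_simp


lemma FTboth_prod (V W : (Fin n → Fin m → F) → ℂ)
    (pe : (Fin n → Fin m → F) × (Fin n → Fin m → F)) :
    FTboth p F n m (fun qe => V qe.1 * W qe.2) pe
      = FT p F n m V pe.1 * FT p F n m W pe.2 := by
  unfold FTboth FT
  rw [Fintype.sum_prod_type]
  conv_rhs => rw [mul_mul_mul_comm, Finset.sum_mul_sum]
  rw [sq]
  congr 1
  refine Finset.sum_congr rfl fun a _ => ?_
  refine Finset.sum_congr rfl fun b _ => ?_
  ring

lemma FT_inv (f : (Fin n → Fin m → F) → ℂ) (e : Fin n → Fin m → F) :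
    (↑(Real.sqrt ((Fintype.card F : ℝ) ^ (m * n))) : ℂ)⁻¹ *
      ∑ z : Fin n → Fin m → F, FT p F n m f z * chr p F (- dotP F n m z e) = f e := by
  set s : ℂ := (↑(Real.sqrt ((Fintype.card F : ℝ) ^ (m * n))) : ℂ) with hs
  have hs0 : s ≠ 0 := by
    rw [hs]
    exact_mod_cast (sqrt_card_pos F n m).ne'
  have hsq : s ^ 2 = ((Fintype.card F : ℂ) ^ (m * n)) := sqrt_card_sq F n m
  unfold FT
  rw [← hs]
  have key : ∀ a : Fin n → Fin m → F,
      ∑ z : Fin n → Fin m → F, chr p F (dotP F n m a z) * chr p F (- dotP F n m z e)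
      = if a - e = 0 then ((Fintype.card F : ℂ) ^ (m * n)) else 0 := by
    intro a
    have h1 : ∀ z, chr p F (dotP F n m a z) * chr p F (- dotP F n m z e)
        = chr p F (dotP F n m z (a - e)) := by
      intro z
      rw [← chr_add, dotP_sub_right, dotP_comm F n m a z]
      ring_nf
    simp_rw [h1]
    exact sum_chr_dot p F n m (a - e)
  calc s⁻¹ * ∑ z : Fin n → Fin m → F,
        (s⁻¹ * ∑ a, f a * chr p F (dotP F n m a z)) * chr p F (- dotP F n m z e)
      = s⁻¹ * s⁻¹ * ∑ a, f a *
          ∑ z, chr p F (dotP F n m a z) * chr p F (- dotP F n m z e) := by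
        rw [mul_assoc]
        congr 1
        calc ∑ z : Fin n → Fin m → F,
              (s⁻¹ * ∑ a, f a * chr p F (dotP F n m a z)) * chr p F (- dotP F n m z e)
            = s⁻¹ * ∑ z : Fin n → Fin m → F, ∑ a, f a *
                (chr p F (dotP F n m a z) * chr p F (- dotP F n m z e)) := by
              rw [Finset.mul_sum]
              refine Finset.sum_congr rfl fun z _ => ?_
              rw [mul_assoc, Finset.sum_mul]
              congr 1
              refine Finset.sum_congr rfl fun a _ => ?_
              ring
          _ = s⁻¹ * ∑ a, ∑ z, f a *
                (chr p F (dotP F n m a z) * chr p F (- dotP F n m z e)) := by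
              rw [Finset.sum_comm]
          _ = s⁻¹ * ∑ a, f a * ∑ z,
                chr p F (dotP F n m a z) * chr p F (- dotP F n m z e) := by
              congr 1
              exact Finset.sum_congr rfl fun a _ => (Finset.mul_sum _ _ _).symm
    _ = f e := by
        simp_rw [key, sub_eq_zero]
        rw [Finset.sum_eq_single e]
        · simp only [if_pos trivial]
          rw [← hsq]
          field_simp
        · intro b _ hb
          simp [hb]
        · intro hh
          exact absurd (Finset.mem_univ e) hh

open scoped Classical

def kfun (V W : (Fin n → Fin m → F) → ℂ)
    (Fd : (Fin n → Fin m → F) → (Fin n → Fin m → F))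
    (pe : (Fin n → Fin m → F) × (Fin n → Fin m → F)) : ℂ :=
  FT p F n m V (pe.1 + Fd pe.2) * FT p F n m W (pe.2 - (pe.1 + Fd pe.2))

def kbfun (V W : (Fin n → Fin m → F) → ℂ)
    (Fd : (Fin n → Fin m → F) → (Fin n → Fin m → F))
    (GOOD : Set ((Fin n → Fin m → F) × (Fin n → Fin m → F)))
    (pe : (Fin n → Fin m → F) × (Fin n → Fin m → F)) : ℂ :=
  if (pe.1 + Fd pe.2, pe.2 - (pe.1 + Fd pe.2)) ∈ GOOD then 0 else kfun p F n m V W Fd pe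

def Afun (V W : (Fin n → Fin m → F) → ℂ) (z : Fin n → Fin m → F) : ℂ :=
  ∑ x : Fin n → Fin m → F, FT p F n m V x * FT p F n m W (z - x)

def ABfun (V W : (Fin n → Fin m → F) → ℂ)
    (GOOD : Set ((Fin n → Fin m → F) × (Fin n → Fin m → F)))
    (z : Fin n → Fin m → F) : ℂ :=
  ∑ qe : (Fin n → Fin m → F) × (Fin n → Fin m → F),
    if qe ∉ GOOD ∧ qe.1 + qe.2 = z then FT p F n m V qe.1 * FT p F n m W qe.2 else 0

lemma A_pairs (V W : (Fin n → Fin m → F) → ℂ) (z : Fin n → Fin m → F) :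
    Afun p F n m V W z
      = ∑ qe : (Fin n → Fin m → F) × (Fin n → Fin m → F),
          if qe.1 + qe.2 = z then FT p F n m V qe.1 * FT p F n m W qe.2 else 0 := by
  unfold Afun
  rw [Fintype.sum_prod_type]
  refine Finset.sum_congr rfl fun x _ => ?_
  rw [Finset.sum_eq_single (z - x)]
  · have hzz : x + (z - x) = z := by abel
    simp [hzz]
  · intro e _ he
    rw [if_neg]
    simp only
    intro hc
    exact he (by rw [← hc]; abel)
  · intro hh
    exact absurd (Finset.mem_univ _) hh

lemma GS_eq (V W : (Fin n → Fin m → F) → ℂ)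
    (Fd : (Fin n → Fin m → F) → (Fin n → Fin m → F))
    (GOOD : Set ((Fin n → Fin m → F) × (Fin n → Fin m → F)))
    (hG : ∀ pe ∈ GOOD, Fd (pe.1 + pe.2) = pe.1) (z : Fin n → Fin m → F) :
    Afun p F n m V W z - ABfun p F n m V W GOOD z
      = if (Fd z, z - Fd z) ∈ GOOD then FT p F n m V (Fd z) * FT p F n m W (z - Fd z)
        else 0 := by
  have step1 : Afun p F n m V W z - ABfun p F n m V W GOOD z
      = ∑ qe : (Fin n → Fin m → F) × (Fin n → Fin m → F),
          if qe ∈ GOOD ∧ qe.1 + qe.2 = z then FT p F n m V qe.1 * FT p F n m W qe.2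
          else 0 := by
    rw [A_pairs, ABfun, ← Finset.sum_sub_distrib]
    refine Finset.sum_congr rfl fun qe _ => ?_
    by_cases hgd : qe ∈ GOOD <;> by_cases hz : qe.1 + qe.2 = z <;>
      simp [hgd, hz]
  rw [step1, Finset.sum_eq_single (Fd z, z - Fd z)]
  · have hzz : Fd z + (z - Fd z) = z := by abel
    by_cases hgd : (Fd z, z - Fd z) ∈ GOOD <;> simp [hgd, hzz]
  · rintro qe _ hne
    rw [if_neg]
    rintro ⟨hqg, hqs⟩
    apply hne
    have h1 : Fd z = qe.1 := by rw [← hqs]; exact hG qe hqg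
    have h2 : qe.2 = z - Fd z := by rw [h1, ← hqs]; abel
    exact Prod.ext h1.symm h2
  · intro hh
    exact absurd (Finset.mem_univ _) hh

lemma k_decomp (V W : (Fin n → Fin m → F) → ℂ)
    (Fd : (Fin n → Fin m → F) → (Fin n → Fin m → F))
    (GOOD : Set ((Fin n → Fin m → F) × (Fin n → Fin m → F)))
    (hG : ∀ pe ∈ GOOD, Fd (pe.1 + pe.2) = pe.1)
    (pe : (Fin n → Fin m → F) × (Fin n → Fin m → F)) :
    kfun p F n m V W Fd pe
      = kbfun p F n m V W Fd GOOD pe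
        + ((if pe.1 = 0 then Afun p F n m V W pe.2 else 0)
          + (if pe.1 = 0 then - ABfun p F n m V W GOOD pe.2 else 0)) := by
  by_cases hg : (pe.1 + Fd pe.2, pe.2 - (pe.1 + Fd pe.2)) ∈ GOOD
  · have hx : pe.1 = 0 := by
      have h1 := hG _ hg
      simp only at h1
      rw [show pe.1 + Fd pe.2 + (pe.2 - (pe.1 + Fd pe.2)) = pe.2 by abel] at h1
      have h2 : pe.1 + Fd pe.2 = 0 + Fd pe.2 := by rw [zero_add]; exact h1.symm
      exact add_right_cancel h2
    rw [kbfun, if_pos hg, if_pos hx, if_pos hx]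
    have hsum : (if (Fd pe.2, pe.2 - Fd pe.2) ∈ GOOD then
        FT p F n m V (Fd pe.2) * FT p F n m W (pe.2 - Fd pe.2) else 0)
        = kfun p F n m V W Fd pe := by
      rw [kfun, hx, zero_add, if_pos (by rwa [hx, zero_add] at hg)]
    rw [zero_add, ← sub_eq_add_neg, GS_eq p F n m V W Fd GOOD hG]
    exact hsum.symm
  · rw [kbfun, if_neg hg]
    have hzero : (if pe.1 = 0 then Afun p F n m V W pe.2 else 0)
        + (if pe.1 = 0 then - ABfun p F n m V W GOOD pe.2 else 0) = 0 := by
      by_cases hx : pe.1 = 0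
      · rw [if_pos hx, if_pos hx, ← sub_eq_add_neg, GS_eq p F n m V W Fd GOOD hG,
          if_neg (by rwa [hx, zero_add] at hg)]
      · rw [if_neg hx, if_neg hx, add_zero]
    rw [hzero, add_zero]




lemma parseval_pairs (g : (Fin n → Fin m → F) × (Fin n → Fin m → F) → ℂ) :
    ∑ pe : (Fin n → Fin m → F) × (Fin n → Fin m → F),
      ‖(invFTsecond p F n m g pe)‖ ^ 2
    = ∑ pe : (Fin n → Fin m → F) × (Fin n → Fin m → F), ‖(g pe)‖ ^ 2 := by
  rw [Fintype.sum_prod_type, Fintype.sum_prod_type]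
  refine Finset.sum_congr rfl fun x _ => ?_
  exact parseval_aux p F n m (fun z => g (x, z))

def shiftEquiv (Fd : (Fin n → Fin m → F) → (Fin n → Fin m → F)) :
    ((Fin n → Fin m → F) × (Fin n → Fin m → F)) ≃
      ((Fin n → Fin m → F) × (Fin n → Fin m → F)) where
  toFun pe := (pe.1 + Fd pe.2, pe.2 - (pe.1 + Fd pe.2))
  invFun qe := (qe.1 - Fd (qe.1 + qe.2), qe.1 + qe.2)
  left_inv := by
    rintro ⟨x, z⟩
    have h : (x + Fd z) + (z - (x + Fd z)) = z := by abel
    simp only [h]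
    exact Prod.ext (add_sub_cancel_right _ _) rfl
  right_inv := by
    rintro ⟨a, b⟩
    have h : (a - Fd (a + b)) + Fd (a + b) = a := by abel
    simp only [h]
    exact Prod.ext rfl (add_sub_cancel_left _ _)

lemma diff_eq (V W : (Fin n → Fin m → F) → ℂ)
    (Fd : (Fin n → Fin m → F) → (Fin n → Fin m → F))
    (GOOD : Set ((Fin n → Fin m → F) × (Fin n → Fin m → F)))
    (hG : ∀ pe ∈ GOOD, Fd (pe.1 + pe.2) = pe.1)
    (pe : (Fin n → Fin m → F) × (Fin n → Fin m → F)) :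
    invFTsecond p F n m
        (UFmap F n m Fd (Uadd F n m (FTboth p F n m (fun qe => V qe.1 * W qe.2)))) pe
      - (↑(Real.sqrt ((Fintype.card F : ℝ) ^ (m * n))) *
          if pe.1 = 0 then V pe.2 * W pe.2 else 0)
    = invFTsecond p F n m (kbfun p F n m V W Fd GOOD) pe
      + invFTsecond p F n m
          (fun qe => if qe.1 = 0 then - ABfun p F n m V W GOOD qe.2 else 0) pe := by
  have hpipe : ∀ qe : (Fin n → Fin m → F) × (Fin n → Fin m → F),
      (UFmap F n m Fd (Uadd F n m (FTboth p F n m (fun qe => V qe.1 * W qe.2)))) qe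
        = kfun p F n m V W Fd qe := by
    intro qe
    unfold UFmap Uadd
    rw [FTboth_prod]
    rfl
  unfold invFTsecond
  simp_rw [hpipe, k_decomp p F n m V W Fd GOOD hG, add_mul, Finset.sum_add_distrib, mul_add]
  have hidl : (↑(Real.sqrt ((Fintype.card F : ℝ) ^ (m * n))) : ℂ)⁻¹ *
        ∑ z, (if pe.1 = 0 then Afun p F n m V W z else 0) *
        chr p F (- dotP F n m z pe.2)
      = (↑(Real.sqrt ((Fintype.card F : ℝ) ^ (m * n))) : ℂ) *
          (if pe.1 = 0 then V pe.2 * W pe.2 else 0) := by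
    set s : ℂ := (↑(Real.sqrt ((Fintype.card F : ℝ) ^ (m * n))) : ℂ) with hs
    by_cases hx : pe.1 = 0
    · simp only [if_pos hx]
      have hA : ∀ z, Afun p F n m V W z
          = s * FT p F n m (fun a => V a * W a) z := fun z => FT_conv p F n m V W z
      simp_rw [hA]
      rw [show ∑ z, (s * FT p F n m (fun a => V a * W a) z) * chr p F (- dotP F n m z pe.2)
          = s * ∑ z, FT p F n m (fun a => V a * W a) z * chr p F (- dotP F n m z pe.2) by
        rw [Finset.mul_sum]
        exact Finset.sum_congr rfl fun z _ => by ring]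
      rw [show s⁻¹ * (s * ∑ z, FT p F n m (fun a => V a * W a) z *
            chr p F (- dotP F n m z pe.2))
          = s * (s⁻¹ * ∑ z, FT p F n m (fun a => V a * W a) z *
            chr p F (- dotP F n m z pe.2)) by ring]
      rw [FT_inv p F n m (fun a => V a * W a) pe.2]
    · simp only [if_neg hx]
      simp
  linear_combination hidl

lemma l2_triangle {κ : Type*} [Fintype κ] (f g : κ → ℂ) :
    Real.sqrt (∑ i, ‖(f i + g i)‖ ^ 2)
      ≤ Real.sqrt (∑ i, ‖(f i)‖ ^ 2) + Real.sqrt (∑ i, ‖(g i)‖ ^ 2) := by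
  have h := norm_add_le (E := EuclideanSpace ℂ κ)
    ((WithLp.equiv 2 (κ → ℂ)).symm f) ((WithLp.equiv 2 (κ → ℂ)).symm g)
  simpa [EuclideanSpace.norm_eq] using h


open scoped Classical in
/-- Technical state-transformation lemma: applying `QFT ⊗ QFT`, then `(x,e) ↦ (x, x+e)`,
then `(x,z) ↦ (x - F(z), z)`, then the inverse `QFT` on the second register, to
`∑ V(x)W(e)|x⟩|e⟩` yields a vector within `√ε + √δ` (in `ℓ²`) of
`|Σ|^{n/2} ∑_z (V·W)(z)|0⟩|z⟩`. -/
theorem stmt_12 (n m : ℕ) (V W : (Fin n → Fin m → F) → ℂ)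
    (hV : ∑ x : Fin n → Fin m → F, ‖(V x)‖ ^ 2 = 1)
    (hW : ∑ e : Fin n → Fin m → F, ‖(W e)‖ ^ 2 = 1)
    (Fd : (Fin n → Fin m → F) → (Fin n → Fin m → F))
    (GOOD : Set ((Fin n → Fin m → F) × (Fin n → Fin m → F)))
    (hG : ∀ pe ∈ GOOD, Fd (pe.1 + pe.2) = pe.1)
    (ε δ : ℝ)
    (h1 : ∑ pe : (Fin n → Fin m → F) × (Fin n → Fin m → F),
        (if pe ∉ GOOD then ‖(FT p F n m V pe.1 * FT p F n m W pe.2)‖ ^ 2 else 0)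
        ≤ ε)
    (h2 : ∑ z : Fin n → Fin m → F,
        ‖(∑ pe : (Fin n → Fin m → F) × (Fin n → Fin m → F),
          if pe ∉ GOOD ∧ pe.1 + pe.2 = z then FT p F n m V pe.1 * FT p F n m W pe.2 else 0)‖ ^ 2
        ≤ δ) :
    Real.sqrt (∑ pe : (Fin n → Fin m → F) × (Fin n → Fin m → F),
        ‖(invFTsecond p F n m
              (UFmap F n m Fd (Uadd F n m (FTboth p F n m (fun qe => V qe.1 * W qe.2)))) pe
            - (↑(Real.sqrt ((Fintype.card F : ℝ) ^ (m * n))) *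
                if pe.1 = 0 then V pe.2 * W pe.2 else 0))‖ ^ 2)
      ≤ Real.sqrt ε + Real.sqrt δ := by

  have hb1 : ∑ pe : (Fin n → Fin m → F) × (Fin n → Fin m → F),
      ‖(kbfun p F n m V W Fd GOOD pe)‖ ^ 2 ≤ ε := by
    refine le_trans (le_of_eq ?_) h1
    rw [← Equiv.sum_comp (shiftEquiv F n m Fd)
      (fun qe => if qe ∉ GOOD then ‖(FT p F n m V qe.1 * FT p F n m W qe.2)‖ ^ 2 else 0)]
    refine Finset.sum_congr rfl fun pe _ => ?_
    unfold kbfun kfun shiftEquiv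
    simp only [Equiv.coe_fn_mk]
    by_cases hgd : (pe.1 + Fd pe.2, pe.2 - (pe.1 + Fd pe.2)) ∈ GOOD
    · simp [hgd]
    · simp [hgd]
  have hb2 : ∑ pe : (Fin n → Fin m → F) × (Fin n → Fin m → F),
      ‖(if pe.1 = 0 then - ABfun p F n m V W GOOD pe.2 else 0)‖ ^ 2 ≤ δ := by
    refine le_trans (le_of_eq ?_) h2
    rw [Fintype.sum_prod_type]
    have hterm : ∀ x z : Fin n → Fin m → F,
        ‖(if x = 0 then - ABfun p F n m V W GOOD z else 0)‖ ^ 2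
          = if x = 0 then ‖(ABfun p F n m V W GOOD z)‖ ^ 2 else 0 := by
      intro x z
      split_ifs <;> simp
    simp_rw [hterm]
    have hswap : ∀ x : Fin n → Fin m → F,
        (∑ z : Fin n → Fin m → F,
          if x = 0 then ‖(ABfun p F n m V W GOOD z)‖ ^ 2 else 0)
        = if x = 0 then ∑ z : Fin n → Fin m → F,
            ‖(ABfun p F n m V W GOOD z)‖ ^ 2 else 0 := by
      intro x
      split_ifs <;> simp
    simp_rw [hswap]
    rw [Finset.sum_ite_eq' Finset.univ (0 : Fin n → Fin m → F)]
    simp [ABfun]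
  calc Real.sqrt (∑ pe : (Fin n → Fin m → F) × (Fin n → Fin m → F),
        ‖(invFTsecond p F n m
              (UFmap F n m Fd (Uadd F n m (FTboth p F n m (fun qe => V qe.1 * W qe.2)))) pe
            - (↑(Real.sqrt ((Fintype.card F : ℝ) ^ (m * n))) *
                if pe.1 = 0 then V pe.2 * W pe.2 else 0))‖ ^ 2)
      = Real.sqrt (∑ pe : (Fin n → Fin m → F) × (Fin n → Fin m → F),
          ‖(invFTsecond p F n m (kbfun p F n m V W Fd GOOD) pe
            + invFTsecond p F n m
                (fun qe => if qe.1 = 0 then - ABfun p F n m V W GOOD qe.2 else 0) pe)‖ ^ 2) := by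
        congr 1
        exact Finset.sum_congr rfl fun pe _ => by
          rw [diff_eq p F n m V W Fd GOOD hG pe]
    _ ≤ Real.sqrt (∑ pe : (Fin n → Fin m → F) × (Fin n → Fin m → F),
          ‖(invFTsecond p F n m (kbfun p F n m V W Fd GOOD) pe)‖ ^ 2)
        + Real.sqrt (∑ pe : (Fin n → Fin m → F) × (Fin n → Fin m → F),
          ‖(invFTsecond p F n m
            (fun qe => if qe.1 = 0 then - ABfun p F n m V W GOOD qe.2 else 0) pe)‖ ^ 2) :=
        l2_triangle _ _
    _ = Real.sqrt (∑ pe : (Fin n → Fin m → F) × (Fin n → Fin m → F),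
          ‖(kbfun p F n m V W Fd GOOD pe)‖ ^ 2)
        + Real.sqrt (∑ pe : (Fin n → Fin m → F) × (Fin n → Fin m → F),
          ‖(if pe.1 = 0 then - ABfun p F n m V W GOOD pe.2 else 0)‖ ^ 2) := by
        rw [parseval_pairs, parseval_pairs]
    _ ≤ Real.sqrt ε + Real.sqrt δ :=
        add_le_add (Real.sqrt_le_sqrt hb1) (Real.sqrt_le_sqrt hb2)


end
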